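/- Assume β_I(R)<∞ and f̂* := sup_{w∈ℝ²} (f*f)(w) < ∞, where (f*f)(w)=∫_{ℝ²} f(u)f(w−u)du. Then for all λ_p>0 and c̄>0, P₁(R,c̄,λ_p)·P₂(R,c̄) ≥ exp(−λ_p c̄ β_I(R)) · exp(−c̄ f̂* β_I(R)); that is, the success probability in the clustered network is at least P_p(λ_p c̄)·P_p(c̄ f̂*). -/
import Mathlib


open MeasureTheory ProbabilityTheory Filter Real
open scoped ProbabilityTheory

local notation "E2" => EuclideanSpace ℝ (Fin 2)

set_option maxHeartbeats 1000000 in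
/-- Lower bound on the success probability of a Neyman–Scott clustered network
under Rayleigh fading: `P₁(R,c̄,λ_p)·P₂(R,c̄) ≥ P_p(λ_p c̄)·P_p(c̄ f̂*)`. -/
theorem stmt_2
    (g f : E2 → ℝ) (T R lamp cbar : ℝ)
    (hT : 0 < T) (hR : 0 < R) (hlamp : 0 < lamp) (hcbar : 0 < cbar)
    (hg_pos : ∀ x : E2, x ≠ 0 → 0 < g x)
    (hg_cont : ContinuousOn g {(0 : E2)}ᶜ)
    (hg_mono : ∀ x y : E2, x ≠ 0 → y ≠ 0 → ‖x‖ ≤ ‖y‖ → g y ≤ g x)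
    (hg_int : ∀ ε : ℝ, 0 < ε → IntegrableOn g (Metric.ball (0 : E2) ε)ᶜ)
    (hf_meas : Measurable f) (hf_nonneg : ∀ x, 0 ≤ f x)
    (hf_prob : ∫ x, f x = 1)
    (hf_iso : ∀ x y : E2, ‖x‖ = ‖y‖ → f x = f y)
    (z : E2) (hz : z = EuclideanSpace.single (0 : Fin 2) R)
    (β : E2 → ℝ)
    (hβ : ∀ y, β y = ∫ x, g (x - y - z) / (g z / T + g (x - y - z)) * f x)
    (βI : ℝ) (hβI : βI = ∫ u, g u / (g z / T + g u))
    (hβI_fin : Integrable fun u : E2 => g u / (g z / T + g u))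
    (fstar : ℝ) (hfstar : fstar = ⨆ w : E2, ∫ u, f u * f (w - u))
    (hfstar_bdd : BddAbove (Set.range fun w : E2 => ∫ u, f u * f (w - u)))
    (P1 P2 : ℝ)
    (hP1 : P1 = Real.exp (-(lamp * ∫ y, (1 - Real.exp (-(cbar * β y))))))
    (hP2 : P2 = ∫ y, Real.exp (-(cbar * β y)) * f y) :
    Real.exp (-(lamp * cbar * βI)) * Real.exp (-(cbar * fstar * βI)) ≤ P1 * P2 := by
  classical
  -- basic positivity facts
  have hz0 : z ≠ 0 := by
    rw [hz]
    intro hcon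
    have h0 : (EuclideanSpace.single (0 : Fin 2) R) 0 = (0 : E2) 0 := by rw [hcon]
    rw [EuclideanSpace.single_apply] at h0
    simp at h0
    exact hR.ne' h0
  set h : E2 → ℝ := fun u => g u / (g z / T + g u) with hh
  have h_int : Integrable h := hβI_fin
  have hgz : 0 < g z := hg_pos z hz0
  have h01 : ∀ u : E2, u ≠ 0 → 0 ≤ h u ∧ h u ≤ 1 := by
    intro u hu
    have h1 := hg_pos u hu
    have h2 : 0 < g z / T + g u := add_pos (div_pos hgz hT) h1
    refine ⟨le_of_lt (div_pos h1 h2), ?_⟩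
    rw [hh]
    rw [div_le_one h2]
    nlinarith [div_pos hgz hT]
  have ae_ne : ∀ c : E2, ∀ᵐ u : E2, u ≠ c := by
    intro c
    rw [ae_iff]
    simp only [not_not]
    simpa using measure_singleton c
  have f_int : Integrable f := by
    by_contra hc
    rw [integral_undef hc] at hf_prob
    exact one_ne_zero hf_prob.symm
  have hβ' : ∀ y, β y = ∫ x, h (x - y - z) * f x := by
    intro y; simp only [hh]; exact hβ y
  -- pointwise bounds on β
  have hβ_nonneg : ∀ y, 0 ≤ β y := by
    intro y
    rw [hβ' y]
    refine integral_nonneg_of_ae ?_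
    filter_upwards [ae_ne (y + z)] with x hx
    have hx' : x - y - z ≠ 0 := by rwa [sub_sub, sub_ne_zero]
    exact mul_nonneg (h01 _ hx').1 (hf_nonneg x)
  have hβ_le_one : ∀ y, β y ≤ 1 := by
    intro y
    rw [hβ' y, ← hf_prob]
    refine integral_mono_of_nonneg ?_ f_int ?_
    · filter_upwards [ae_ne (y + z)] with x hx
      have hx' : x - y - z ≠ 0 := by rwa [sub_sub, sub_ne_zero]
      exact mul_nonneg (h01 _ hx').1 (hf_nonneg x)
    · filter_upwards [ae_ne (y + z)] with x hx
      have hx' : x - y - z ≠ 0 := by rwa [sub_sub, sub_ne_zero]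
      calc h (x - y - z) * f x ≤ 1 * f x :=
            mul_le_mul_of_nonneg_right (h01 _ hx').2 (hf_nonneg x)
        _ = f x := one_mul _
  have hβI_nonneg : 0 ≤ βI := by
    rw [hβI]
    refine integral_nonneg_of_ae ?_
    filter_upwards [ae_ne 0] with u hu
    exact (h01 u hu).1
  -- measure-theoretic plumbing
  have hsub_z_qmp : Measure.QuasiMeasurePreserving (fun u : E2 => u - z) volume volume :=
    (measurePreserving_sub_right volume z).quasiMeasurePreserving
  have hφ : Measure.QuasiMeasurePreserving (fun p : E2 × E2 => p.1 - p.2 - z)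
      ((volume : Measure E2).prod volume) volume := by
    have h1 : MeasurePreserving (fun p : E2 × E2 => (p.1 - p.2, p.2))
        ((volume : Measure E2).prod volume) ((volume : Measure E2).prod volume) :=
      measurePreserving_sub_prod volume volume
    exact (hsub_z_qmp.comp Measure.quasiMeasurePreserving_fst).comp h1.quasiMeasurePreserving
  have K2_aesm : AEStronglyMeasurable (fun p : E2 × E2 => h (p.1 - p.2 - z) * f p.1)
      ((volume : Measure E2).prod volume) :=
    (h_int.aestronglyMeasurable.comp_quasiMeasurePreserving hφ).mul
      (hf_meas.comp measurable_fst).aestronglyMeasurable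
  have K2_int : Integrable (fun p : E2 × E2 => h (p.1 - p.2 - z) * f p.1)
      ((volume : Measure E2).prod volume) := by
    rw [integrable_prod_iff K2_aesm]
    constructor
    · refine Filter.Eventually.of_forall fun x => ?_
      show Integrable (fun y => h (x - y - z) * f x) volume
      have e : (fun y : E2 => h (x - y - z) * f x) = fun y => h ((x - z) - y) * f x := by
        funext y; rw [sub_right_comm]
      rw [e]
      exact (h_int.comp_sub_left (x - z)).mul_const (f x)
    · show Integrable (fun x => ∫ y, ‖h (x - y - z) * f x‖) volume
      have ec : ∀ x : E2, (∫ y, ‖h (x - y - z) * f x‖) = (∫ u, ‖h u‖) * ‖f x‖ := by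
        intro x
        have e1 : (fun y : E2 => ‖h (x - y - z) * f x‖) = fun y => ‖h ((x - z) - y)‖ * ‖f x‖ := by
          funext y; rw [sub_right_comm, norm_mul]
        rw [e1, integral_mul_const, integral_sub_left_eq_self (fun u => ‖h u‖) volume (x - z)]
      simp only [ec]
      exact f_int.norm.const_mul _
  have K_int : Integrable (fun p : E2 × E2 => h (p.2 - p.1 - z) * f p.2)
      ((volume : Measure E2).prod volume) := K2_int.swap
  have hβ_int : Integrable β := by
    rw [show β = (fun y => ∫ x, h (x - y - z) * f x) from funext hβ']
    exact K_int.integral_prod_left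
  -- ∫ β = βI
  have hintβ : ∫ y, β y = βI := by
    have e2 : ∀ x : E2, (∫ y, h (x - y - z) * f x) = βI * f x := by
      intro x
      have e1 : (fun y : E2 => h (x - y - z) * f x) = fun y => h ((x - z) - y) * f x := by
        funext y; rw [sub_right_comm]
      rw [e1, integral_mul_const, integral_sub_left_eq_self h volume (x - z), ← hβI, mul_comm]
    calc ∫ y, β y = ∫ y, ∫ x, h (x - y - z) * f x := by
          rw [show β = (fun y => ∫ x, h (x - y - z) * f x) from funext hβ']
      _ = ∫ x, ∫ y, h (x - y - z) * f x :=
          (integral_integral_swap (f := fun x y => h (x - y - z) * f x) K2_int).symm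
      _ = ∫ x, βI * f x := by
          simp only [e2]
      _ = βI := by rw [integral_const_mul, hf_prob, mul_one]
  -- P1 lower bound
  have key1 : (∫ y, (1 - Real.exp (-(cbar * β y)))) ≤ cbar * βI := by
    have hmono : (∫ y, (1 - Real.exp (-(cbar * β y)))) ≤ ∫ y, cbar * β y := by
      refine integral_mono_of_nonneg ?_ (hβ_int.const_mul cbar) ?_
      · refine Filter.Eventually.of_forall fun y => ?_
        have hle : Real.exp (-(cbar * β y)) ≤ 1 := by
          rw [Real.exp_le_one_iff]
          have := mul_nonneg hcbar.le (hβ_nonneg y)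
          linarith
        show (0 : ℝ) ≤ 1 - Real.exp (-(cbar * β y))
        linarith
      · refine Filter.Eventually.of_forall fun y => ?_
        have := Real.add_one_le_exp (-(cbar * β y))
        show 1 - Real.exp (-(cbar * β y)) ≤ cbar * β y
        linarith
    calc (∫ y, (1 - Real.exp (-(cbar * β y)))) ≤ ∫ y, cbar * β y := hmono
      _ = cbar * ∫ y, β y := integral_const_mul cbar β
      _ = cbar * βI := by rw [hintβ]
  have hP1_ge : Real.exp (-(lamp * cbar * βI)) ≤ P1 := by
    rw [hP1, Real.exp_le_exp]
    have := mul_le_mul_of_nonneg_left key1 hlamp.le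
    nlinarith
  -- the convolution bound
  have hCw : ∀ w : E2, (∫ y, f (w + y) * f y) ≤ fstar := by
    intro w
    have e2 : (∫ y, f (w + y) * f y) = ∫ u, f u * f (w - u) := by
      rw [← integral_sub_right_eq_self (fun y => f (w + y) * f y) w]
      congr 1
      funext u
      rw [add_sub_cancel]
      rw [hf_iso (u - w) (w - u) (by rw [norm_sub_rev])]
    rw [e2, hfstar]
    exact le_ciSup hfstar_bdd w
  have hC_nonneg : ∀ w : E2, 0 ≤ ∫ y, f (w + y) * f y := fun w =>
    integral_nonneg fun y => mul_nonneg (hf_nonneg _) (hf_nonneg _)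
  have hfstar_nonneg : 0 ≤ fstar := le_trans (hC_nonneg 0) (by simpa using hCw 0)
  -- integrability of the shifted product function
  have M_aesm : AEStronglyMeasurable (fun p : E2 × E2 => h (p.2 - z) * (f (p.2 + p.1) * f p.1))
      ((volume : Measure E2).prod volume) := by
    refine AEStronglyMeasurable.mul ?_ ?_
    · exact h_int.aestronglyMeasurable.comp_quasiMeasurePreserving
        (hsub_z_qmp.comp Measure.quasiMeasurePreserving_snd)
    · exact ((hf_meas.comp (measurable_snd.add measurable_fst)).mul
        (hf_meas.comp measurable_fst)).aestronglyMeasurable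
  have Mbound : ∀ y : E2, ∀ᵐ w : E2, ‖h (w - z) * (f (w + y) * f y)‖ ≤ f (w + y) * f y := by
    intro y
    filter_upwards [ae_ne z] with w hw
    have hwz : w - z ≠ 0 := sub_ne_zero.2 hw
    have h0 := h01 _ hwz
    rw [Real.norm_eq_abs, abs_mul, abs_of_nonneg h0.1,
      abs_of_nonneg (mul_nonneg (hf_nonneg _) (hf_nonneg _))]
    calc h (w - z) * (f (w + y) * f y) ≤ 1 * (f (w + y) * f y) :=
          mul_le_mul_of_nonneg_right h0.2 (mul_nonneg (hf_nonneg _) (hf_nonneg _))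
      _ = f (w + y) * f y := one_mul _
  have Mrow_aesm : ∀ y : E2, AEStronglyMeasurable (fun w : E2 => h (w - z) * (f (w + y) * f y))
      volume := by
    intro y
    exact (h_int.aestronglyMeasurable.comp_quasiMeasurePreserving hsub_z_qmp).mul
      ((hf_meas.comp (measurable_add_const y)).aestronglyMeasurable.mul_const (f y))
  have M_int : Integrable (fun p : E2 × E2 => h (p.2 - z) * (f (p.2 + p.1) * f p.1))
      ((volume : Measure E2).prod volume) := by
    rw [integrable_prod_iff M_aesm]
    constructor
    · refine Filter.Eventually.of_forall fun y => ?_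
      show Integrable (fun w => h (w - z) * (f (w + y) * f y)) volume
      exact Integrable.mono' ((f_int.comp_add_right y).mul_const (f y)) (Mrow_aesm y) (Mbound y)
    · show Integrable (fun y => ∫ w, ‖h (w - z) * (f (w + y) * f y)‖) volume
      refine Integrable.mono' f_int M_aesm.norm.integral_prod_right' ?_
      refine Filter.Eventually.of_forall fun y => ?_
      have hbase : ∫ w, f (w + y) * f y = f y := by
        rw [integral_mul_const, integral_add_right_eq_self f y, hf_prob, one_mul]
      have hb : (∫ w, ‖h (w - z) * (f (w + y) * f y)‖) ≤ f y := by
        calc (∫ w, ‖h (w - z) * (f (w + y) * f y)‖) ≤ ∫ w, f (w + y) * f y := by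
              refine integral_mono_of_nonneg (Filter.Eventually.of_forall fun w => norm_nonneg _)
                ((f_int.comp_add_right y).mul_const (f y)) (Mbound y)
          _ = f y := hbase
      have h0 : 0 ≤ ∫ w, ‖h (w - z) * (f (w + y) * f y)‖ :=
        integral_nonneg fun w => norm_nonneg _
      rw [Real.norm_of_nonneg h0]
      exact hb
  -- J = ∫ β f ≤ fstar * βI
  have hJ : (∫ y, β y * f y) ≤ fstar * βI := by
    have e1 : ∀ y : E2, β y * f y = ∫ w, h (w - z) * (f (w + y) * f y) := by
      intro y
      rw [hβ' y, ← integral_mul_const]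
      rw [← integral_add_right_eq_self (fun x => h (x - y - z) * f x * f y) y]
      congr 1
      funext w
      rw [add_sub_cancel_right, mul_assoc]
    have e3 : ∀ w : E2, (∫ y, h (w - z) * (f (w + y) * f y))
        = h (w - z) * ∫ y, f (w + y) * f y := fun w => integral_const_mul _ _
    calc (∫ y, β y * f y) = ∫ y, ∫ w, h (w - z) * (f (w + y) * f y) := by simp_rw [e1]
      _ = ∫ w, ∫ y, h (w - z) * (f (w + y) * f y) :=
          integral_integral_swap (f := fun y w => h (w - z) * (f (w + y) * f y)) M_int
      _ ≤ ∫ w, h (w - z) * fstar := by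
          refine integral_mono_of_nonneg ?_ ((h_int.comp_sub_right z).mul_const fstar) ?_
          · filter_upwards [ae_ne z] with w hw
            have hwz : w - z ≠ 0 := sub_ne_zero.2 hw
            exact integral_nonneg fun y =>
              mul_nonneg (h01 _ hwz).1 (mul_nonneg (hf_nonneg _) (hf_nonneg _))
          · filter_upwards [ae_ne z] with w hw
            have hwz : w - z ≠ 0 := sub_ne_zero.2 hw
            rw [e3 w]
            exact mul_le_mul_of_nonneg_left (hCw w) (h01 _ hwz).1
      _ = fstar * βI := by
          rw [integral_mul_const, integral_sub_right_eq_self h z, ← hβI, mul_comm]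
  -- integrabilities for the P2 estimate
  have hβf_int : Integrable fun y => β y * f y := by
    refine Integrable.mono' f_int (hβ_int.aestronglyMeasurable.mul hf_meas.aestronglyMeasurable) ?_
    refine Filter.Eventually.of_forall fun y => ?_
    rw [Real.norm_eq_abs, abs_mul, abs_of_nonneg (hβ_nonneg y), abs_of_nonneg (hf_nonneg y)]
    calc β y * f y ≤ 1 * f y := mul_le_mul_of_nonneg_right (hβ_le_one y) (hf_nonneg y)
      _ = f y := one_mul _
  have hexpβ_aesm : AEStronglyMeasurable (fun y => Real.exp (-(cbar * β y)) * f y) volume := by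
    refine AEStronglyMeasurable.mul ?_ hf_meas.aestronglyMeasurable
    exact (Real.measurable_exp.comp_aemeasurable
      ((hβ_int.aemeasurable.const_mul cbar).neg)).aestronglyMeasurable
  have hexpβf_int : Integrable fun y => Real.exp (-(cbar * β y)) * f y := by
    refine Integrable.mono' f_int hexpβ_aesm ?_
    refine Filter.Eventually.of_forall fun y => ?_
    have hexple : Real.exp (-(cbar * β y)) ≤ 1 := by
      rw [Real.exp_le_one_iff]
      have := mul_nonneg hcbar.le (hβ_nonneg y)
      linarith
    rw [Real.norm_eq_abs, abs_mul, abs_of_nonneg (Real.exp_nonneg _), abs_of_nonneg (hf_nonneg y)]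
    calc Real.exp (-(cbar * β y)) * f y ≤ 1 * f y :=
          mul_le_mul_of_nonneg_right hexple (hf_nonneg y)
      _ = f y := one_mul _
  -- P2 lower bound via the tangent-line inequality
  have hP2_ge : Real.exp (-(cbar * fstar * βI)) ≤ P2 := by
    set s0 : ℝ := -(cbar * fstar * βI) with hs0
    have step : ∀ y, Real.exp s0 * ((1 - s0) * f y - cbar * (β y * f y))
        ≤ Real.exp (-(cbar * β y)) * f y := by
      intro y
      have htan : Real.exp s0 * (1 + (-(cbar * β y)) - s0) ≤ Real.exp (-(cbar * β y)) := by
        have h1 : (-(cbar * β y)) - s0 + 1 ≤ Real.exp ((-(cbar * β y)) - s0) :=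
          Real.add_one_le_exp _
        have h2 := mul_le_mul_of_nonneg_left h1 (Real.exp_nonneg s0)
        rw [← Real.exp_add, add_sub_cancel] at h2
        nlinarith
      have h3 := mul_le_mul_of_nonneg_right htan (hf_nonneg y)
      nlinarith
    have int_le : (∫ y, Real.exp s0 * ((1 - s0) * f y - cbar * (β y * f y))) ≤ P2 := by
      rw [hP2]
      exact integral_mono
        (((f_int.const_mul (1 - s0)).sub (hβf_int.const_mul cbar)).const_mul (Real.exp s0))
        hexpβf_int step
    have lhs_eq : (∫ y, Real.exp s0 * ((1 - s0) * f y - cbar * (β y * f y)))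
        = Real.exp s0 * ((1 - s0) - cbar * ∫ y, β y * f y) := by
      rw [integral_const_mul, integral_sub (f_int.const_mul (1 - s0)) (hβf_int.const_mul cbar),
        integral_const_mul, integral_const_mul, hf_prob, mul_one]
    have hJ' : cbar * (∫ y, β y * f y) ≤ -s0 := by
      rw [hs0, neg_neg, mul_assoc]
      exact mul_le_mul_of_nonneg_left hJ hcbar.le
    calc Real.exp s0 = Real.exp s0 * 1 := (mul_one _).symm
      _ ≤ Real.exp s0 * ((1 - s0) - cbar * ∫ y, β y * f y) := by
          refine mul_le_mul_of_nonneg_left ?_ (Real.exp_nonneg s0)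
          linarith
      _ = ∫ y, Real.exp s0 * ((1 - s0) * f y - cbar * (β y * f y)) := lhs_eq.symm
      _ ≤ P2 := int_le
  -- combine
  have hP1_pos : 0 ≤ P1 := le_trans (Real.exp_nonneg _) hP1_ge
  exact mul_le_mul hP1_ge hP2_ge (Real.exp_nonneg _) hP1_pos
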